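/- Let V be a real inner product space, V₀ ⊆ V a subspace, and R : V₀ → ℝ a linear functional. Let Π : V₀ → V₀ be a linear map with R(Π v) = 0 for all v ∈ V₀. Let I be a finite index set and, for each i ∈ I, let Λᵢ : V₀ → V₀ be a linear map, with Σ_{i∈I} Λᵢ = id on V₀. Suppose for each i ∈ I an element eᵢ ∈ V₀ satisfies ⟪eᵢ, v⟫ = R(Λᵢ(v − Π v)) for all v ∈ V₀, and suppose e_h ∈ V₀ satisfies ⟪e_h, v⟫ = R(v) for all v ∈ V₀. Then ‖e_h‖ ≤ ‖Σ_{i∈I} eᵢ‖. -/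

import Mathlib

open scoped RealInnerProductSpace

/-- Abstract form of the SPET global overestimation property (26): the energy
norm of the sum of the patch corrections bounds the energy norm of the error. -/
theorem spet_overestimation {V : Type*} [NormedAddCommGroup V] [InnerProductSpace ℝ V]
    (V₀ : Submodule ℝ V) (R : V₀ →ₗ[ℝ] ℝ) (Proj : V₀ →ₗ[ℝ] V₀)
    (hProj : ∀ v : V₀, R (Proj v) = 0)
    {ι : Type*} [Fintype ι] (Λ : ι → (V₀ →ₗ[ℝ] V₀))
    (hΛ : (∑ i, Λ i) = LinearMap.id)
    (e : ι → V₀)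
    (he : ∀ i, ∀ v : V₀, ⟪((e i : V)), ((v : V))⟫ = R ((Λ i) (v - Proj v)))
    (eh : V₀) (heh : ∀ v : V₀, ⟪((eh : V)), ((v : V))⟫ = R v) :
    ‖(eh : V)‖ ≤ ‖((∑ i, e i : V₀) : V)‖ := by
  have key : ⟪((∑ i, e i : V₀) : V), ((eh : V))⟫ = ‖(eh : V)‖ ^ 2 := by
    have hcoe : ((∑ i, e i : V₀) : V) = ∑ i, ((e i : V)) := by
      simp
    rw [hcoe, sum_inner]
    have : ∑ i, ⟪((e i : V)), ((eh : V))⟫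
        = ∑ i, R ((Λ i) (eh - Proj eh)) := by
      refine Finset.sum_congr rfl fun i _ => he i eh
    rw [this, ← map_sum]
    have hsum : (∑ i, (Λ i) (eh - Proj eh)) = eh - Proj eh := by
      have := congrArg (fun f : V₀ →ₗ[ℝ] V₀ => f (eh - Proj eh)) hΛ
      simpa [LinearMap.sum_apply] using this
    rw [hsum, map_sub, hProj, sub_zero, ← heh eh,
      real_inner_self_eq_norm_sq]
  rcases eq_or_ne ((eh : V)) 0 with h0 | h0
  · simp [h0]
  · have hpos : 0 < ‖(eh : V)‖ := norm_pos_iff.mpr h0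
    have hcs := real_inner_le_norm ((∑ i, e i : V₀) : V) ((eh : V))
    rw [key] at hcs
    have := (mul_le_mul_iff_of_pos_right hpos).mp (by nlinarith : ‖(eh : V)‖ * ‖(eh : V)‖ ≤ ‖((∑ i, e i : V₀) : V)‖ * ‖(eh : V)‖)
    exact this
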